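/- arXiv:2007.12308 — 4 statements merged into one kernel-verified Lean document; each statement's English description precedes it below -/
import Mathlib

section
/- Let p be a prime, q a power of p, m ≥ 1, and k ≥ 0 an integer. Write ν(k) for the p-adic valuation of k (with ν(0) = ∞). Then for the m × m unipotent Jordan block J_m = I + N_m over F_q, the dimension of the kernel of J_m^k − I equals min(p^{ν(k)}, m). In particular J_m^k = I if and only if p^{ν(k)} ≥ m. -/
/-- The `m × m` nilpotent Jordan block: ones on the superdiagonal. -/
def nilJordan (F : Type*) [Field F] (m : ℕ) : Matrix (Fin m) (Fin m) F :=
  fun i j => if (j : ℕ) = (i : ℕ) + 1 then 1 else 0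

section Aux

variable {F : Type*} [Field F] {m : ℕ}

lemma nilJordan_pow_apply (t : ℕ) (i j : Fin m) :
    ((nilJordan F m) ^ t) i j = if (j : ℕ) = (i : ℕ) + t then 1 else 0 := by
  induction t generalizing j with
  | zero =>
      rw [pow_zero, Matrix.one_apply, Nat.add_zero]
      rcases eq_or_ne i j with h | h
      · subst h; rw [if_pos rfl, if_pos rfl]
      · rw [if_neg h, if_neg fun h' => h (Fin.ext h'.symm)]
  | succ t ih =>
      rw [pow_succ, Matrix.mul_apply]
      simp only [ih]
      by_cases h : (i : ℕ) + t < m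
      · rw [Finset.sum_eq_single (⟨(i : ℕ) + t, h⟩ : Fin m)]
        · simp [nilJordan, Nat.add_assoc]
        · intro b _ hb
          rw [if_neg fun h' => hb (Fin.ext h'), zero_mul]
        · simp
      · rw [Finset.sum_eq_zero, if_neg]
        · have := j.isLt; omega
        · intro b _
          rw [if_neg, zero_mul]
          have := b.isLt; omega

lemma nilJordan_pow_eq_zero {t : ℕ} (h : m ≤ t) : (nilJordan F m) ^ t = 0 := by
  ext i j
  rw [nilJordan_pow_apply, Matrix.zero_apply, if_neg]
  have := j.isLt; omega

lemma nilJordan_pow_ne_zero (hm : 0 < m) {t : ℕ} (h : t < m) : (nilJordan F m) ^ t ≠ 0 := by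
  intro h0
  have := congrFun (congrFun h0 ⟨0, hm⟩) ⟨t, h⟩
  rw [nilJordan_pow_apply, Matrix.zero_apply, if_pos (by simp)] at this
  exact one_ne_zero this

lemma nilJordan_pow_mulVec (t : ℕ) (x : Fin m → F) (i : Fin m) :
    ((nilJordan F m) ^ t).mulVec x i
      = if h : (i : ℕ) + t < m then x ⟨(i : ℕ) + t, h⟩ else 0 := by
  rw [Matrix.mulVec, dotProduct]
  simp only [nilJordan_pow_apply]
  by_cases h : (i : ℕ) + t < m
  · rw [dif_pos h, Finset.sum_eq_single (⟨(i : ℕ) + t, h⟩ : Fin m)]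
    · simp
    · intro b _ hb
      rw [if_neg fun h' => hb (Fin.ext h'), zero_mul]
    · simp
  · rw [dif_neg h, Finset.sum_eq_zero]
    intro b _
    rw [if_neg, zero_mul]
    have := b.isLt; omega

/-- Extension-by-zero linear map `(Fin r → F) → (Fin m → F)`. -/
def extMap (F : Type*) [Field F] (m r : ℕ) : (Fin r → F) →ₗ[F] (Fin m → F) where
  toFun y := fun j => if h : (j : ℕ) < r then y ⟨j, h⟩ else 0
  map_add' y z := by
    funext j
    by_cases h : (j : ℕ) < r <;> simp [h]
  map_smul' c y := by
    funext j
    by_cases h : (j : ℕ) < r <;> simp [h]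

lemma extMap_injective (F : Type*) [Field F] (m r : ℕ) (hr : r ≤ m) :
    Function.Injective (extMap F m r) := by
  intro y z hyz
  funext i
  have := congrFun hyz ⟨(i : ℕ), lt_of_lt_of_le i.isLt hr⟩
  simpa [extMap, i.isLt] using this

lemma ker_nilJordan_pow (t : ℕ) :
    LinearMap.ker (Matrix.toLin' ((nilJordan F m) ^ t))
      = LinearMap.range (extMap F m (min t m)) := by
  ext x
  rw [LinearMap.mem_ker, LinearMap.mem_range]
  constructor
  · intro hx
    refine ⟨fun i => x ⟨(i : ℕ), lt_of_lt_of_le i.isLt (min_le_right t m)⟩, ?_⟩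
    funext j
    simp only [extMap, LinearMap.coe_mk, AddHom.coe_mk]
    by_cases h : (j : ℕ) < min t m
    · rw [dif_pos h]
    · rw [dif_neg h]
      have htj : t ≤ (j : ℕ) := by have := j.isLt; omega
      have hi : ((j : ℕ) - t) + t < m := by have := j.isLt; omega
      have := congrFun hx ⟨(j : ℕ) - t, by omega⟩
      rw [Matrix.toLin'_apply, nilJordan_pow_mulVec] at this
      simp only [dif_pos hi] at this
      have hj' : (⟨((j : ℕ) - t) + t, hi⟩ : Fin m) = j :=
        Fin.ext (by simpa using Nat.sub_add_cancel htj)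
      rw [hj'] at this
      simp only [Pi.zero_apply] at this
      exact this.symm
  · rintro ⟨y, rfl⟩
    rw [Matrix.toLin'_apply]
    funext i
    rw [nilJordan_pow_mulVec]
    by_cases h : (i : ℕ) + t < m
    · rw [dif_pos h]
      have : ¬ ((i : ℕ) + t < min t m) := by omega
      simp [extMap, this]
    · rw [dif_neg h]; rfl

lemma finrank_ker_nilJordan_pow (t : ℕ) :
    Module.finrank F (LinearMap.ker (Matrix.toLin' ((nilJordan F m) ^ t))) = min t m := by
  rw [ker_nilJordan_pow,
    LinearMap.finrank_range_of_inj (extMap_injective F m (min t m) (min_le_right t m)),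
    Module.finrank_fin_fun]

lemma commute_aeval_nilpow (s : ℕ) (h : Polynomial F) :
    Commute ((nilJordan F m) ^ s) (Polynomial.aeval ((nilJordan F m) ^ s) h) := by
  set X := (nilJordan F m) ^ s
  show X * _ = _ * X
  calc X * Polynomial.aeval X h
      = Polynomial.aeval X (Polynomial.X * h) := by rw [map_mul, Polynomial.aeval_X]
    _ = Polynomial.aeval X (h * Polynomial.X) := by rw [mul_comm]
    _ = Polynomial.aeval X h * X := by rw [map_mul, Polynomial.aeval_X]

/-- Key factorization: `(1 + N^s)^u - 1 = N^s * W` with `W` a unit, when `(u : F) ≠ 0`. -/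
lemma key_factor (hm : 1 ≤ m) (s u : ℕ) (hs : 1 ≤ s) (hu : (u : F) ≠ 0) :
    ∃ W : Matrix (Fin m) (Fin m) F,
      IsUnit W ∧ (1 + (nilJordan F m) ^ s) ^ u - 1 = (nilJordan F m) ^ s * W := by
  set X := (nilJordan F m) ^ s with hX
  set f : Polynomial F := (1 + Polynomial.X) ^ u - 1 with hf
  have hf0 : f.coeff 0 = 0 := by
    simp [hf, Polynomial.coeff_one_add_X_pow]
  set g : Polynomial F := f.divX with hg
  have hg0 : g.coeff 0 = (u : F) := by
    rw [hg, Polynomial.coeff_divX]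
    simp [hf, Polynomial.coeff_one_add_X_pow, Polynomial.coeff_one]
  have hfg : f = Polynomial.X * g := by
    conv_lhs => rw [← Polynomial.X_mul_divX_add f]
    rw [hf0, map_zero, add_zero]
  refine ⟨Polynomial.aeval X g, ?_, ?_⟩
  · -- IsUnit (aeval X g)
    have hgg : g = Polynomial.C (u : F) + Polynomial.X * g.divX := by
      conv_lhs => rw [← Polynomial.X_mul_divX_add g]
      rw [hg0, add_comm]
    have heq : Polynomial.aeval X g
        = (u : F) • (1 : Matrix (Fin m) (Fin m) F) + X * Polynomial.aeval X g.divX := by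
      conv_lhs => rw [hgg]
      rw [map_add, map_mul, Polynomial.aeval_X, Polynomial.aeval_C,
        Algebra.algebraMap_eq_smul_one]
    rw [heq]
    have hXnil : X ^ m = 0 := by
      rw [hX, ← pow_mul]
      exact nilJordan_pow_eq_zero (Nat.le_mul_of_pos_left m hs)
    have hnil : IsNilpotent (X * Polynomial.aeval X g.divX) := by
      refine ⟨m, ?_⟩
      rw [(commute_aeval_nilpow s g.divX).mul_pow, hXnil, zero_mul]
    have hunit : IsUnit ((u : F) • (1 : Matrix (Fin m) (Fin m) F)) := by
      rw [← Algebra.algebraMap_eq_smul_one]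
      exact (isUnit_iff_ne_zero.mpr hu).map (algebraMap F (Matrix (Fin m) (Fin m) F))
    refine hnil.isUnit_add_left_of_commute hunit ?_
    exact (Commute.one_right _).smul_right (u : F)
  · have : (1 + X) ^ u - 1 = Polynomial.aeval X f := by
      rw [hf]
      simp [map_sub, map_pow, map_add]
    rw [this, hfg, map_mul, Polynomial.aeval_X]

end Aux

/-- For `J_m = I + N_m` over a finite field of characteristic `p`, the nullity of
`J_m^k - I` is `min(p^{ν(k)}, m)` (it is `m` for `k = 0`, corresponding to `ν(0) = ∞`);
in particular `J_m^k = I` iff `p^{ν(k)} ≥ m` (always true for `k = 0`). -/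
theorem stmt_4 {p : ℕ} (hp : p.Prime) {F : Type*} [Field F] [Fintype F] [CharP F p]
    (m : ℕ) (hm : 1 ≤ m) (k : ℕ) :
    Module.finrank F
        (LinearMap.ker (Matrix.toLin' ((1 + nilJordan F m) ^ k - 1)))
      = (if k = 0 then m else min (p ^ padicValNat p k) m) ∧
    ((1 + nilJordan F m) ^ k = 1 ↔ (k = 0 ∨ m ≤ p ^ padicValNat p k)) := by
  haveI : Fact p.Prime := ⟨hp⟩
  haveI : Nonempty (Fin m) := ⟨⟨0, hm⟩⟩
  rcases eq_or_ne k 0 with hk | hk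
  · subst hk
    constructor
    · rw [pow_zero, sub_self, if_pos rfl, map_zero, LinearMap.ker_zero, finrank_top,
        Module.finrank_fin_fun]
    · simp
  -- k ≠ 0
  set ν := padicValNat p k with hν
  set s := p ^ ν with hs
  set u := k / s with hu
  have hsu : s * u = k := by
    have := Nat.ordProj_mul_ordCompl_eq_self k p
    rwa [Nat.factorization_def k hp, ← hν, ← hs, ← hu] at this
  have hpu : ¬ p ∣ u := by
    have := Nat.not_dvd_ordCompl hp hk
    rwa [Nat.factorization_def k hp, ← hν, ← hs, ← hu] at this
  have huF : (u : F) ≠ 0 := fun h => hpu ((CharP.cast_eq_zero_iff F p u).mp h)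
  have hs1 : 1 ≤ s := Nat.one_le_pow _ _ hp.pos
  -- J^k = (1 + N^s)^u
  have hJk : (1 + nilJordan F m) ^ k = (1 + (nilJordan F m) ^ s) ^ u := by
    rw [← hsu, pow_mul, hs]
    congr 1
    rw [add_pow_char_pow_of_commute p ν (Commute.one_left _), one_pow]
  obtain ⟨W, hW, hfac⟩ := key_factor hm s u hs1 huF
  have hJk1 : (1 + nilJordan F m) ^ k - 1 = (nilJordan F m) ^ s * W := by
    rw [hJk]; exact hfac
  constructor
  · rw [if_neg hk, hJk1, Matrix.toLin'_mul, LinearMap.ker_comp]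
    -- toLin' W is bijective
    have hWu : IsUnit (Matrix.toLin' W) := by
      have h1 : IsUnit (Matrix.toLinAlgEquiv' W) := hW.map Matrix.toLinAlgEquiv'
      have h2 : Matrix.toLin' W = Matrix.toLinAlgEquiv' W := by
        apply LinearMap.ext
        intro v
        rw [Matrix.toLin'_apply, Matrix.toLinAlgEquiv'_apply]
      rwa [h2]
    have hbij : Function.Bijective (Matrix.toLin' W) := (Module.End.isUnit_iff _).mp hWu
    let e := LinearEquiv.ofBijective (Matrix.toLin' W) hbij
    have hco : Submodule.comap (Matrix.toLin' W)
          (LinearMap.ker (Matrix.toLin' ((nilJordan F m) ^ s)))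
        = Submodule.comap (e : (Fin m → F) →ₗ[F] (Fin m → F))
          (LinearMap.ker (Matrix.toLin' ((nilJordan F m) ^ s))) := rfl
    rw [hco, Submodule.comap_equiv_eq_map_symm, LinearEquiv.finrank_map_eq,
      finrank_ker_nilJordan_pow]
  · constructor
    · intro h1
      have h0 : (nilJordan F m) ^ s * W = 0 := by rw [← hJk1, h1, sub_self]
      have hNs : (nilJordan F m) ^ s = 0 :=
        hW.mul_right_cancel (by rw [h0, zero_mul])
      right
      by_contra hms
      exact nilJordan_pow_ne_zero hm (lt_of_not_ge hms) hNs
    · rintro (h | h)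
      · exact absurd h hk
      · have hNs : (nilJordan F m) ^ s = 0 := nilJordan_pow_eq_zero h
        have : (1 + nilJordan F m) ^ k - 1 = 0 := by rw [hJk1, hNs, zero_mul]
        exact sub_eq_zero.mp this
end

section
/- Let A be an m × m matrix and B an n × n matrix over a commutative ring, and let 0 ≤ k ≤ m, 0 ≤ l ≤ n. Then the Kronecker product C_k(A) ⊗ C_l(B) of the k-th compound of A and the l-th compound of B appears as a principal submatrix of the (k+l)-th compound matrix C_{k+l}(A ⊕ B) of the block diagonal matrix A ⊕ B, namely the principal submatrix indexed by subsets of the form S ∪ T' where S ⊆ {1,...,m} has size k and T' = {m + j : j ∈ T} for T ⊆ {1,...,n} of size l. -/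
/-- The `r`-th compound matrix: rows and columns indexed by `r`-subsets `S, T`,
with `(S,T)`-entry `det M(S,T)`. -/
def compound {R : Type*} [CommRing R] {ι : Type*} [Fintype ι] [LinearOrder ι]
    (M : Matrix ι ι R) (r : ℕ) :
    Matrix {S : Finset ι // S.card = r} {S : Finset ι // S.card = r} R :=
  fun S T =>
    Matrix.det (Matrix.of fun i j : Fin r =>
      M (S.1.orderIsoOfFin S.2 i) (T.1.orderIsoOfFin T.2 j))

/-- Embedding `{1,…,m} ↪ {1,…,m+n}` (identity). -/
def embL (m n : ℕ) : Fin m ↪ Fin (m + n) :=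
  Function.Embedding.trans (Function.Embedding.inl) (finSumFinEquiv.toEmbedding)

/-- Embedding `{1,…,n} ↪ {1,…,m+n}`, `j ↦ m + j`. -/
def embR (m n : ℕ) : Fin n ↪ Fin (m + n) :=
  Function.Embedding.trans (Function.Embedding.inr) (finSumFinEquiv.toEmbedding)

lemma embL_val {m n : ℕ} (i : Fin m) : (embL m n i : ℕ) = i := by
  simp [embL, finSumFinEquiv]

lemma embR_val {m n : ℕ} (j : Fin n) : (embR m n j : ℕ) = m + j := by
  simp [embR, finSumFinEquiv]

lemma union_orderEmb {m n k l : ℕ} (S : Finset (Fin m)) (T : Finset (Fin n))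
    (hS : S.card = k) (hT : T.card = l)
    (hU : (S.map (embL m n) ∪ T.map (embR m n)).card = k + l) :
    ⇑((S.map (embL m n) ∪ T.map (embR m n)).orderEmbOfFin hU) =
      Fin.append (fun a => embL m n (S.orderEmbOfFin hS a))
        (fun b => embR m n (T.orderEmbOfFin hT b)) := by
  symm
  apply Finset.orderEmbOfFin_unique
  · intro x
    refine Fin.addCases (fun a => ?_) (fun b => ?_) x
    · rw [Fin.append_left]
      exact Finset.mem_union_left _ (Finset.mem_map_of_mem _ (Finset.orderEmbOfFin_mem _ _ _))
    · rw [Fin.append_right]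
      exact Finset.mem_union_right _ (Finset.mem_map_of_mem _ (Finset.orderEmbOfFin_mem _ _ _))
  · intro x y hxy
    revert hxy
    refine Fin.addCases (fun a => ?_) (fun b => ?_) x <;>
      refine Fin.addCases (fun a' => ?_) (fun b' => ?_) y <;>
      intro hxy <;>
      rw [Fin.lt_def] at hxy <;>
      simp only [Fin.coe_castAdd, Fin.coe_natAdd] at hxy <;>
      rw [Fin.lt_def] <;>
      simp only [Fin.append_left, Fin.append_right, embL_val, embR_val]
    · exact (S.orderEmbOfFin hS).strictMono (show a < a' from hxy)
    · have := (S.orderEmbOfFin hS a).2; omega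
    · have := a'.2; omega
    · have : (T.orderEmbOfFin hT b : ℕ) < (T.orderEmbOfFin hT b' : ℕ) :=
        (T.orderEmbOfFin hT).strictMono (show b < b' by omega)
      omega

/-- `C_k(A) ⊗ C_l(B)` is the principal submatrix of `C_{k+l}(A ⊕ B)` indexed by the
subsets `S ∪ T'` with `S ⊆ {1,…,m}`, `|S| = k`, and `T' = {m + j : j ∈ T}`,
`T ⊆ {1,…,n}`, `|T| = l`: the corresponding entries agree. -/
theorem stmt_11 {R : Type*} [CommRing R] {m n k l : ℕ} (hk : k ≤ m) (hl : l ≤ n)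
    (A : Matrix (Fin m) (Fin m) R) (B : Matrix (Fin n) (Fin n) R)
    (S₁ S₂ : Finset (Fin m)) (T₁ T₂ : Finset (Fin n))
    (hS₁ : S₁.card = k) (hS₂ : S₂.card = k) (hT₁ : T₁.card = l) (hT₂ : T₂.card = l)
    (hU₁ : (S₁.map (embL m n) ∪ T₁.map (embR m n)).card = k + l)
    (hU₂ : (S₂.map (embL m n) ∪ T₂.map (embR m n)).card = k + l) :
    compound ((Matrix.fromBlocks A 0 0 B).submatrix finSumFinEquiv.symm finSumFinEquiv.symm)
        (k + l) ⟨S₁.map (embL m n) ∪ T₁.map (embR m n), hU₁⟩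
        ⟨S₂.map (embL m n) ∪ T₂.map (embR m n), hU₂⟩
      = Matrix.kroneckerMap (· * ·) (compound A k) (compound B l)
          (⟨S₁, hS₁⟩, ⟨T₁, hT₁⟩) (⟨S₂, hS₂⟩, ⟨T₂, hT₂⟩) := by
  unfold compound
  simp only [Matrix.kroneckerMap]
  have key : (Matrix.of fun i j : Fin (k + l) =>
      ((Matrix.fromBlocks A 0 0 B).submatrix finSumFinEquiv.symm finSumFinEquiv.symm)
        ((S₁.map (embL m n) ∪ T₁.map (embR m n)).orderIsoOfFin hU₁ i)
        ((S₂.map (embL m n) ∪ T₂.map (embR m n)).orderIsoOfFin hU₂ j))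
      = ((Matrix.fromBlocks
          (Matrix.of fun i j : Fin k => A (S₁.orderEmbOfFin hS₁ i) (S₂.orderEmbOfFin hS₂ j)) 0 0
          (Matrix.of fun i j : Fin l => B (T₁.orderEmbOfFin hT₁ i) (T₂.orderEmbOfFin hT₂ j)))
          |>.submatrix finSumFinEquiv.symm finSumFinEquiv.symm) := by
    ext i j
    have h1 := congrFun (union_orderEmb S₁ T₁ hS₁ hT₁ hU₁)
    have h2 := congrFun (union_orderEmb S₂ T₂ hS₂ hT₂ hU₂)
    simp only [Matrix.of_apply, Matrix.submatrix_apply, Finset.coe_orderIsoOfFin_apply, h1, h2]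
    refine Fin.addCases (fun a => ?_) (fun b => ?_) i <;>
      refine Fin.addCases (fun a' => ?_) (fun b' => ?_) j <;>
      simp [Fin.append_left, Fin.append_right, embL, embR, Matrix.fromBlocks]
  rw [key, Matrix.det_submatrix_equiv_self, Matrix.det_fromBlocks_zero₁₂]
  congr 1
end

section
/- Let F be a field, J_n the n × n unipotent Jordan block over F (ones on the diagonal and superdiagonal), and 1 ≤ r ≤ n. Then the r-th compound matrix C_r(J_n) has block upper triangular form: with rows/columns indexed by r-subsets of {1,...,n}, the entry det J_n(S, T) is 0 whenever n ∈ S and n ∉ T; moreover the principal block on subsets not containing n equals C_r(J_{n-1}), and the principal block on subsets containing n equals C_{r-1}(J_{n-1}) (identifying S ∪ {n} with S). -/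
/-- The `n × n` unipotent Jordan block: ones on the diagonal and superdiagonal. -/
def jordan (F : Type*) [Field F] (n : ℕ) : Matrix (Fin n) (Fin n) F :=
  fun i j => if j = i then 1 else if (j : ℕ) = (i : ℕ) + 1 then 1 else 0

/-- Determinant of the submatrix of `M` with rows in `S` and columns in `T`
(in increasing order) — the `(S,T)`-entry of the `r`-th compound matrix. -/
def subdet {R : Type*} [CommRing R] {ι : Type*} [LinearOrder ι] {r : ℕ}
    (M : Matrix ι ι R) (S T : Finset ι) (hS : S.card = r) (hT : T.card = r) : R :=
  Matrix.det (Matrix.of fun i j : Fin r =>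
    M (S.orderIsoOfFin hS i) (T.orderIsoOfFin hT j))

lemma jordan_castSucc {F : Type*} [Field F] {n : ℕ} (a b : Fin n) :
    jordan F (n + 1) a.castSucc b.castSucc = jordan F n a b := by
  simp only [jordan, Fin.castSucc_inj, Fin.coe_castSucc]

lemma jordan_last_row {F : Type*} [Field F] {n : ℕ} (j : Fin (n + 1)) :
    jordan F (n + 1) (Fin.last n) j = if j = Fin.last n then 1 else 0 := by
  simp only [jordan, Fin.val_last]
  have : ¬ ((j : ℕ) = n + 1) := by omega
  simp [this]

lemma emb_map {n r : ℕ} (S : Finset (Fin n)) (hS : S.card = r)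
    (hS' : (S.map Fin.castSuccEmb).card = r) (i : Fin r) :
    (S.map Fin.castSuccEmb).orderEmbOfFin hS' i = Fin.castSucc (S.orderEmbOfFin hS i) := by
  have := Finset.orderEmbOfFin_unique (f := fun i => Fin.castSucc (S.orderEmbOfFin hS i)) hS'
    (fun x => Finset.mem_map_of_mem _ (S.orderEmbOfFin_mem hS x))
    (fun a b hab => by
      simpa [Fin.castSucc_lt_castSucc_iff] using (S.orderEmbOfFin hS).strictMono hab)
  exact (congrFun this i).symm

lemma emb_insert {n m : ℕ} (S : Finset (Fin n)) (hS : S.card = m)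
    (hS' : (insert (Fin.last n) (S.map Fin.castSuccEmb)).card = m + 1) (i : Fin (m + 1)) :
    (insert (Fin.last n) (S.map Fin.castSuccEmb)).orderEmbOfFin hS' i
      = (Fin.snoc (fun j => Fin.castSucc (S.orderEmbOfFin hS j)) (Fin.last n) : Fin (m+1) → Fin (n+1)) i := by
  have := Finset.orderEmbOfFin_unique
    (f := Fin.snoc (fun j => Fin.castSucc (S.orderEmbOfFin hS j)) (Fin.last n)) hS'
    (fun x => by
      refine Fin.lastCases ?_ (fun j => ?_) x
      · simp
      · simp only [Fin.snoc_castSucc]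
        exact Finset.mem_insert_of_mem (Finset.mem_map_of_mem _ (S.orderEmbOfFin_mem hS j)))
    (fun a b hab => by
      rcases Fin.eq_castSucc_or_eq_last b with ⟨b', rfl⟩ | rfl
      · have ha : a ≠ Fin.last m := fun h => by
          subst h; exact absurd hab (not_lt.2 (Fin.castSucc_lt_last _).le)
        obtain ⟨a', rfl⟩ := Fin.exists_castSucc_eq.2 ha
        simp only [Fin.snoc_castSucc]
        rw [Fin.castSucc_lt_castSucc_iff] at hab ⊢
        exact (S.orderEmbOfFin hS).strictMono hab
      · have ha : a ≠ Fin.last m := hab.ne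
        obtain ⟨a', rfl⟩ := Fin.exists_castSucc_eq.2 ha
        simp only [Fin.snoc_castSucc, Fin.snoc_last]
        exact Fin.castSucc_lt_last _)
  exact (congrFun this i).symm

/-- Block upper-triangular structure of `C_r(J_{n+1})`: the entry `det J_{n+1}(S,T)`
vanishes when the last index lies in `S` but not in `T`; the principal block on
subsets avoiding the last index is `C_r(J_n)`; and the principal block on subsets
containing the last index is `C_{r-1}(J_n)`. -/
theorem stmt_13 {F : Type*} [Field F] (n r : ℕ) (hr : 1 ≤ r) (hrn : r ≤ n + 1) :
    (∀ (S T : Finset (Fin (n + 1))) (hS : S.card = r) (hT : T.card = r),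
        Fin.last n ∈ S → Fin.last n ∉ T → subdet (jordan F (n + 1)) S T hS hT = 0) ∧
    (∀ (S T : Finset (Fin n)) (hS : S.card = r) (hT : T.card = r)
        (hS' : (S.map Fin.castSuccEmb).card = r)
        (hT' : (T.map Fin.castSuccEmb).card = r),
        subdet (jordan F (n + 1)) (S.map Fin.castSuccEmb)
            (T.map Fin.castSuccEmb) hS' hT'
          = subdet (jordan F n) S T hS hT) ∧
    (∀ (S T : Finset (Fin n)) (hS : S.card = r - 1) (hT : T.card = r - 1)
        (hS' : (insert (Fin.last n) (S.map Fin.castSuccEmb)).card = r)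
        (hT' : (insert (Fin.last n) (T.map Fin.castSuccEmb)).card = r),
        subdet (jordan F (n + 1)) (insert (Fin.last n) (S.map Fin.castSuccEmb))
            (insert (Fin.last n) (T.map Fin.castSuccEmb)) hS' hT'
          = subdet (jordan F n) S T hS hT) := by

  refine ⟨?_, ?_, ?_⟩
  · intro S T hS hT hSl hTl
    apply Matrix.det_eq_zero_of_row_eq_zero ((S.orderIsoOfFin hS).symm ⟨Fin.last n, hSl⟩)
    intro j
    simp only [Matrix.of_apply]
    have h1 : (S.orderIsoOfFin hS ((S.orderIsoOfFin hS).symm ⟨Fin.last n, hSl⟩) : Fin (n+1))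
        = Fin.last n := by simp
    rw [h1, jordan_last_row]
    have h2 : (T.orderEmbOfFin hT) j ≠ Fin.last n :=
      fun h => hTl (h ▸ T.orderEmbOfFin_mem hT j)
    simp [Finset.coe_orderIsoOfFin_apply, h2]
  · intro S T hS hT hS' hT'
    unfold subdet
    congr 1
    ext i j
    simp only [Matrix.of_apply, Finset.coe_orderIsoOfFin_apply, emb_map S hS hS',
      emb_map T hT hT', jordan_castSucc]
  · intro S T hS hT hS' hT'
    obtain ⟨m, rfl⟩ : ∃ m, r = m + 1 := ⟨r - 1, by omega⟩
    simp only [Nat.add_sub_cancel] at hS hT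
    unfold subdet
    rw [Matrix.det_succ_row _ (Fin.last m)]
    rw [Finset.sum_eq_single (Fin.last m)]
    · have hlast : ((insert (Fin.last n) (S.map Fin.castSuccEmb)).orderIsoOfFin hS'
          (Fin.last m) : Fin (n+1)) = Fin.last n := by
        rw [Finset.coe_orderIsoOfFin_apply, emb_insert S hS hS', Fin.snoc_last]
      have hlastT : ((insert (Fin.last n) (T.map Fin.castSuccEmb)).orderIsoOfFin hT'
          (Fin.last m) : Fin (n+1)) = Fin.last n := by
        rw [Finset.coe_orderIsoOfFin_apply, emb_insert T hT hT', Fin.snoc_last]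
      simp only [Matrix.of_apply, hlast, hlastT, jordan_last_row, if_true]
      have hsign : ((-1 : F) ^ ((Fin.last m : ℕ) + (Fin.last m : ℕ))) = 1 :=
        Even.neg_one_pow ⟨m, rfl⟩
      rw [mul_one, hsign, one_mul]
      congr 1
      ext i j
      simp only [Matrix.submatrix_apply, Matrix.of_apply, Fin.succAbove_last,
        Finset.coe_orderIsoOfFin_apply, emb_insert S hS hS', emb_insert T hT hT',
        Fin.snoc_castSucc, emb_map, jordan_castSucc]
    · intro b _ hb
      obtain ⟨b', rfl⟩ := Fin.exists_castSucc_eq.2 hb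
      have hcol : ((insert (Fin.last n) (T.map Fin.castSuccEmb)).orderIsoOfFin hT'
          b'.castSucc : Fin (n+1)) = Fin.castSucc (T.orderEmbOfFin hT b') := by
        rw [Finset.coe_orderIsoOfFin_apply, emb_insert T hT hT', Fin.snoc_castSucc]
      have hlast : ((insert (Fin.last n) (S.map Fin.castSuccEmb)).orderIsoOfFin hS'
          (Fin.last m) : Fin (n+1)) = Fin.last n := by
        rw [Finset.coe_orderIsoOfFin_apply, emb_insert S hS hS', Fin.snoc_last]
      simp only [Matrix.of_apply, hcol, hlast, jordan_last_row]
      rw [if_neg (by exact (Fin.castSucc_lt_last _).ne), mul_zero, zero_mul]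
    · intro h
      exact absurd (Finset.mem_univ _) h
end

section
/- Let F be a field, J_n the n × n unipotent Jordan block over F, and r ≥ 1. Then rank(C_r(J_n) − I) ≥ C(n−1, r), where C_r denotes the r-th compound matrix and C(n−1, r) the binomial coefficient. -/
private lemma sum_orderEmbOfFin {m r : ℕ} (S : Finset (Fin m)) (hS : S.card = r) :
    ∑ i : Fin r, ((S.orderEmbOfFin hS i : Fin m) : ℕ) = ∑ x ∈ S, (x : ℕ) := by
  rw [← Finset.sum_coe_sort S (fun x => ((x : Fin m) : ℕ))]
  exact Fintype.sum_equiv (S.orderIsoOfFin hS).toEquiv _ _ (fun i => rfl)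

private lemma entry_eq {F : Type*} [Field F] {m r : ℕ} {S T : Finset (Fin m)}
    (hS : S.card = r) (hT : T.card = r)
    (P Q : {U : Finset (Fin (m + 1)) // U.card = r})
    (hP : P.1 = S.map Fin.castSuccEmb) (hQ : Q.1 = T.map (Fin.succEmb m)) :
    compound (jordan F (m + 1)) r P Q =
      Matrix.det (Matrix.of fun i j : Fin r =>
        if ((T.orderEmbOfFin hT j : ℕ) + 1 = (S.orderEmbOfFin hS i : ℕ)) then (1 : F)
        else if ((T.orderEmbOfFin hT j : ℕ) = (S.orderEmbOfFin hS i : ℕ)) then 1 else 0) := by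
  obtain ⟨P, hPc⟩ := P
  obtain ⟨Q, hQc⟩ := Q
  dsimp only at hP hQ
  subst hP; subst hQ
  have hrow : ∀ i : Fin r, (S.map Fin.castSuccEmb).orderEmbOfFin hPc i =
      Fin.castSucc (S.orderEmbOfFin hS i) := by
    have := Finset.orderEmbOfFin_unique hPc
      (f := fun i => Fin.castSucc (S.orderEmbOfFin hS i))
      (fun i => Finset.mem_map_of_mem _ (Finset.orderEmbOfFin_mem S hS i))
      (Fin.strictMono_castSucc.comp (S.orderEmbOfFin hS).strictMono)
    intro i
    exact (congrFun this i).symm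
  have hcol : ∀ j : Fin r, (T.map (Fin.succEmb m)).orderEmbOfFin hQc j =
      Fin.succ (T.orderEmbOfFin hT j) := by
    have := Finset.orderEmbOfFin_unique hQc
      (f := fun j => Fin.succ (T.orderEmbOfFin hT j))
      (fun j => Finset.mem_map_of_mem _ (Finset.orderEmbOfFin_mem T hT j))
      (Fin.strictMono_succ.comp (T.orderEmbOfFin hT).strictMono)
    intro j
    exact (congrFun this j).symm
  show Matrix.det _ = Matrix.det _
  congr 1
  ext i j
  simp only [Matrix.of_apply, Finset.coe_orderIsoOfFin_apply, hrow, hcol, jordan,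
    Fin.ext_iff, Fin.val_succ, Fin.coe_castSucc, Nat.add_right_cancel_iff]

private lemma exists_perm_of_det_ne_zero {R : Type*} [CommRing R] {k : ℕ}
    (M : Matrix (Fin k) (Fin k) R) (h : M.det ≠ 0) :
    ∃ σ : Equiv.Perm (Fin k), ∀ j, M (σ j) j ≠ 0 := by
  by_contra hc
  push_neg at hc
  apply h
  rw [Matrix.det_apply]
  apply Finset.sum_eq_zero
  intro σ _
  obtain ⟨j, hj⟩ := hc σ
  rw [Finset.prod_eq_zero (f := fun i => M (σ i) i) (Finset.mem_univ j) hj, smul_zero]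

private lemma det_diag {F : Type*} [Field F] {r : ℕ} (s : Fin r → ℕ) (hs : StrictMono s) :
    Matrix.det (Matrix.of fun i j : Fin r =>
      if (s j + 1 = s i) then (1 : F) else if (s j = s i) then 1 else 0) = 1 := by
  rw [Matrix.det_of_lowerTriangular]
  · have h : ∀ i : Fin r, (Matrix.of fun i j : Fin r =>
        if (s j + 1 = s i) then (1 : F) else if (s j = s i) then 1 else 0) i i = 1 := by
      intro i
      simp [Matrix.of_apply]
    rw [Finset.prod_congr rfl (fun i _ => h i), Finset.prod_const_one]
  · intro i j hij
    have hij' : i < j := hij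
    have := hs hij'
    simp only [Matrix.of_apply]
    rw [if_neg (by omega), if_neg (by omega)]

private lemma det_offdiag {F : Type*} [Field F] {m r : ℕ} (S T : Finset (Fin m))
    (hS : S.card = r) (hT : T.card = r) (hne : S ≠ T)
    (hw : ∑ x ∈ S, (x : ℕ) ≤ ∑ x ∈ T, (x : ℕ)) :
    Matrix.det (Matrix.of fun i j : Fin r =>
      if ((T.orderEmbOfFin hT j : ℕ) + 1 = (S.orderEmbOfFin hS i : ℕ)) then (1 : F)
      else if ((T.orderEmbOfFin hT j : ℕ) = (S.orderEmbOfFin hS i : ℕ)) then 1 else 0) = 0 := by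
  by_contra hdet
  obtain ⟨σ, hσ⟩ := exists_perm_of_det_ne_zero _ hdet
  let s : Fin r → ℕ := fun i => ((S.orderEmbOfFin hS i : Fin m) : ℕ)
  let t : Fin r → ℕ := fun j => ((T.orderEmbOfFin hT j : Fin m) : ℕ)
  have key : ∀ j, t j ≤ s (σ j) := by
    intro j
    have h := hσ j
    simp only [Matrix.of_apply] at h
    show ((T.orderEmbOfFin hT j : Fin m) : ℕ) ≤ ((S.orderEmbOfFin hS (σ j) : Fin m) : ℕ)
    by_contra hlt
    push_neg at hlt
    rw [if_neg (by omega), if_neg (by omega)] at h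
    exact h rfl
  have hsum : ∑ j : Fin r, s (σ j) = ∑ i : Fin r, s i := Equiv.sum_comp σ s
  have hws : ∑ i : Fin r, s i = ∑ x ∈ S, (x : ℕ) := sum_orderEmbOfFin S hS
  have hwt : ∑ j : Fin r, t j = ∑ x ∈ T, (x : ℕ) := sum_orderEmbOfFin T hT
  have heq : ∀ j, t j = s (σ j) := by
    by_contra hc
    push_neg at hc
    obtain ⟨j0, hj0⟩ := hc
    have hlt : ∑ j : Fin r, t j < ∑ j : Fin r, s (σ j) :=
      Finset.sum_lt_sum (fun j _ => key j)
        ⟨j0, Finset.mem_univ _, lt_of_le_of_ne (key j0) hj0⟩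
    rw [hsum, hws, hwt] at hlt
    omega
  have hsub : T ⊆ S := by
    intro x hx
    have hxj : ∃ j : Fin r, (T.orderEmbOfFin hT j : Fin m) = x := by
      refine ⟨(T.orderIsoOfFin hT).symm ⟨x, hx⟩, ?_⟩
      rw [← Finset.coe_orderIsoOfFin_apply]
      simp
    obtain ⟨j, hj⟩ := hxj
    have : x = S.orderEmbOfFin hS (σ j) := by
      apply Fin.ext
      rw [← hj]
      exact heq j
    rw [this]
    exact Finset.orderEmbOfFin_mem S hS (σ j)
  exact hne (Finset.eq_of_subset_of_card_le hsub (by omega)).symm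

/-- `rank(C_r(J_n) - I) ≥ C(n-1, r)` for `r ≥ 1`. -/
theorem stmt_14 {F : Type*} [Field F] (n r : ℕ) (hr : 1 ≤ r) :
    (n - 1).choose r ≤ (compound (jordan F n) r - 1).rank := by
  obtain _ | m := n
  · rw [Nat.zero_sub, Nat.choose_eq_zero_of_lt hr]
    exact Nat.zero_le _
  rw [Nat.add_sub_cancel]
  set CP := compound (jordan F (m + 1)) r with hCP
  set C := CP - 1 with hC
  let A := {S : Finset (Fin m) // S.card = r}
  let idx := {S : Finset (Fin (m + 1)) // S.card = r}
  let ρ : A → idx := fun S => ⟨S.1.map Fin.castSuccEmb, by rw [Finset.card_map, S.2]⟩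
  let κ : A → idx := fun S => ⟨S.1.map (Fin.succEmb m), by rw [Finset.card_map, S.2]⟩
  set N : Matrix A A F := C.submatrix ρ κ with hN
  -- weights
  let w : A → ℕ := fun S => ∑ x ∈ S.1, (x : ℕ)
  have hδ : ∀ a b : A, w a ≤ w b → ρ a ≠ κ b := by
    intro a b hab hEq
    have h1 : ∑ x ∈ (ρ a).1, (x : ℕ) = w a := by
      simp [ρ, Finset.sum_map, w]
    have h2 : ∑ x ∈ (κ b).1, (x : ℕ) = w b + r := by
      simp only [κ, Finset.sum_map]
      simp only [Fin.coe_succEmb, Fin.val_succ]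
      rw [Finset.sum_add_distrib, Finset.sum_const, smul_eq_mul, mul_one, b.2]
    rw [hEq, h2] at h1
    omega
  -- entries of N
  have hdiag : ∀ a : A, N a a = 1 := by
    intro a
    have h0 : CP (ρ a) (κ a) = 1 := by
      rw [hCP, entry_eq a.2 a.2 (ρ a) (κ a) rfl rfl]
      exact det_diag _ (Fin.val_strictMono.comp (a.1.orderEmbOfFin a.2).strictMono)
    have h1 : (1 : Matrix idx idx F) (ρ a) (κ a) = 0 :=
      Matrix.one_apply_ne (hδ a a le_rfl)
    rw [hN, Matrix.submatrix_apply, hC, Matrix.sub_apply, h0, h1, sub_zero]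
  have hoff : ∀ a b : A, a ≠ b → w a ≤ w b → N a b = 0 := by
    intro a b hab hwab
    have h0 : CP (ρ a) (κ b) = 0 := by
      rw [hCP, entry_eq a.2 b.2 (ρ a) (κ b) rfl rfl]
      exact det_offdiag a.1 b.1 a.2 b.2 (fun h => hab (Subtype.ext h)) hwab
    have h1 : (1 : Matrix idx idx F) (ρ a) (κ b) = 0 :=
      Matrix.one_apply_ne (hδ a b hwab)
    rw [hN, Matrix.submatrix_apply, hC, Matrix.sub_apply, h0, h1, sub_zero]
  -- N is block triangular with respect to minus the weight
  have hbt : N.BlockTriangular (fun a : A => -(w a : ℤ)) := by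
    intro a b hab
    have hwb : w a < w b := by
      simp only [neg_lt_neg_iff] at hab
      exact_mod_cast hab
    exact hoff a b (fun h => by rw [h] at hwb; omega) hwb.le
  have hdet : N.det = 1 := by
    rw [hbt.det]
    apply Finset.prod_eq_one
    intro z _
    have : N.toSquareBlock (fun a : A => -(w a : ℤ)) z = 1 := by
      ext a b
      simp only [Matrix.toSquareBlock_def]
      by_cases hab : a = b
      · subst hab
        rw [Matrix.one_apply_eq]
        exact hdiag a.1
      · rw [Matrix.one_apply_ne hab]
        have hab' : a.1 ≠ b.1 := fun h => hab (Subtype.ext h)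
        have : w a.1 = w b.1 := by
          have := a.2.trans b.2.symm
          omega
        exact hoff a.1 b.1 hab' this.le
    rw [this, Matrix.det_one]
  -- rank N = card A
  have hrankN : N.rank = Fintype.card A := by
    apply Matrix.rank_of_isUnit
    rw [Matrix.isUnit_iff_isUnit_det, hdet]
    exact isUnit_one
  have hcard : Fintype.card A = m.choose r := by
    rw [Fintype.card_finset_len, Fintype.card_fin]
  -- rank N ≤ rank C
  have hfac : N = ((1 : Matrix idx idx F).submatrix ρ id) * C *
      ((1 : Matrix idx idx F).submatrix id κ) := by
    ext a b
    simp [hN, Matrix.submatrix_apply, Matrix.mul_apply, Matrix.one_apply, Matrix.submatrix_apply, ite_mul, mul_ite,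
      one_mul, zero_mul, mul_zero, mul_one, Finset.sum_ite_eq, Finset.sum_ite_eq']
  have hle : N.rank ≤ C.rank := by
    rw [hfac]
    calc (((1 : Matrix idx idx F).submatrix ρ id) * C *
        ((1 : Matrix idx idx F).submatrix id κ)).rank
        ≤ (((1 : Matrix idx idx F).submatrix ρ id) * C).rank :=
          Matrix.rank_mul_le_left _ _
      _ ≤ C.rank := Matrix.rank_mul_le_right _ _
  rw [← hcard, ← hrankN]
  exact hle
end
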